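/- arXiv:2502.10945 — 2 statements merged into one kernel-verified Lean document; each statement's English description precedes it below -/
import Mathlib

section
/- Let A be a finite-dimensional ℝ-algebra equipped with an ℝ-linear involution x ↦ x' (an anti-automorphism of order ≤ 2) that is positive, meaning Tr(x·x') > 0 for all nonzero x ∈ A (Tr denoting the trace of left multiplication). Then A is a semisimple algebra. -/
set_option maxHeartbeats 1000000


/-- A finite-dimensional real algebra with a positive involution is semisimple
(its Jacobson radical is zero). Here `Tr` is the trace of left multiplication. -/
theorem semisimple_of_positive_involution
    (A : Type) [Ring A] [Algebra ℝ A] [FiniteDimensional ℝ A]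
    (σ : A →ₗ[ℝ] A)
    (hanti : ∀ x y : A, σ (x * y) = σ y * σ x)
    (hinv : ∀ x : A, σ (σ x) = x)
    (hpos : ∀ x : A, x ≠ 0 →
      0 < LinearMap.trace ℝ A (LinearMap.mulLeft ℝ (x * σ x))) :
    (⊥ : Ideal A).jacobson = ⊥ := by
  set J : Ideal A := (⊥ : Ideal A).jacobson with hJ
  rw [eq_bot_iff]
  intro x hx
  simp only [Ideal.mem_bot]
  by_contra hx0
  -- a key fact: a symmetric nonzero element has nonzero square
  have key : ∀ b : A, σ b = b → b ≠ 0 → b * b ≠ 0 := by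
    intro b hb hb0 h2
    have := hpos b hb0
    rw [hb, h2] at this
    simp at this
  have hσx : σ x ≠ 0 := by
    intro h
    apply hx0
    have := hinv x
    rw [h, map_zero] at this
    exact this.symm
  set a : A := σ x * x with ha
  have haJ : a ∈ J := J.mul_mem_left (σ x) hx
  have haσ : σ a = a := by rw [ha, hanti, hinv]
  have ha0 : a ≠ 0 := by
    intro h
    have := hpos (σ x) hσx
    rw [hinv, ← ha, h] at this
    simp at this
  -- all 2^k powers of a are nonzero and symmetric
  have hpow : ∀ k : ℕ, a ^ (2 ^ k) ≠ 0 ∧ σ (a ^ (2 ^ k)) = a ^ (2 ^ k) := by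
    intro k
    induction k with
    | zero => simpa using ⟨ha0, haσ⟩
    | succ k ih =>
      have h2 : a ^ (2 ^ (k + 1)) = a ^ (2 ^ k) * a ^ (2 ^ k) := by
        rw [← pow_add]
        congr 1
        ring
      constructor
      · rw [h2]; exact key _ ih.2 ih.1
      · rw [h2, hanti, ih.2]
  -- powers of a lie in J
  have hpowJ : ∀ m : ℕ, a ^ (m + 1) ∈ J := by
    intro m
    rw [pow_succ]
    exact J.mul_mem_left _ haJ
  -- A is an Artinian ring
  haveI : IsArtinianRing A := isArtinian_of_tower ℝ inferInstance
  -- the descending chain of left ideals generated by a ^ (2 ^ k) stabilizes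
  have hmono : ∀ k : ℕ, Ideal.span {a ^ (2 ^ (k + 1))} ≤ Ideal.span {a ^ (2 ^ k)} := by
    intro k
    rw [Ideal.span_le, Set.singleton_subset_iff]
    have h2 : a ^ (2 ^ (k + 1)) = a ^ (2 ^ k) * a ^ (2 ^ k) := by
      rw [← pow_add]; congr 1; ring
    rw [h2]
    exact Ideal.mul_mem_left _ _ (Ideal.subset_span rfl)
  let f : ℕ →o (Ideal A)ᵒᵈ :=
    ⟨fun k => OrderDual.toDual (Ideal.span {a ^ (2 ^ k)}),
      monotone_nat_of_le_succ fun k => OrderDual.toDual_le_toDual.mpr (hmono k)⟩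
  obtain ⟨n, hn⟩ := IsArtinian.monotone_stabilizes f
  have heq : Ideal.span {a ^ (2 ^ n)} = Ideal.span {a ^ (2 ^ (n + 1))} :=
    congrArg OrderDual.ofDual (hn (n + 1) (Nat.le_succ n))
  set b : A := a ^ (2 ^ n) with hb
  have hbJ : b ∈ J := by
    have h1 : 2 ^ n = (2 ^ n - 1) + 1 := (Nat.succ_pred_eq_of_pos (Nat.two_pow_pos n)).symm
    rw [hb, h1]
    exact hpowJ _
  have hbb : a ^ (2 ^ (n + 1)) = b * b := by
    rw [hb, ← pow_add]; congr 1; ring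
  have hmem : b ∈ Ideal.span {b * b} := by
    rw [← hbb, ← heq]
    exact Ideal.subset_span rfl
  obtain ⟨c, hc⟩ := Submodule.mem_span_singleton.mp hmem
  rw [smul_eq_mul] at hc
  -- since b ∈ jacobson ⊥, 1 - c * b has a left inverse
  obtain ⟨z, hz⟩ := Ideal.mem_jacobson_iff.mp hbJ (-c)
  rw [Ideal.mem_bot] at hz
  have hz1 : z * (1 - c * b) = 1 := by
    have h : z * -c * b + z - 1 = z * (1 - c * b) - 1 := by noncomm_ring
    rw [h] at hz
    have := sub_eq_zero.mp hz
    exact this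
  have hb0 : b = 0 := by
    calc b = (z * (1 - c * b)) * b := by rw [hz1, one_mul]
    _ = z * (b - c * (b * b)) := by noncomm_ring
    _ = 0 := by rw [hc]; simp
  exact (hpow n).1 hb0
end

section
/- Let A be a finite-dimensional ℝ-algebra with a positive involution x ↦ x' (i.e., Tr(x x') > 0 for x ≠ 0). If α ∈ A satisfies α · α' = q · 1 for some positive real number q, then every eigenvalue λ ∈ ℂ of left multiplication by α on A ⊗_ℝ ℂ has absolute value √q. -/
open TensorProduct

section Aux

variable (A : Type) [Ring A] [Algebra ℝ A] [FiniteDimensional ℝ A]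

lemma mul_eq_mulLeft (z : A) : LinearMap.mul ℝ A z = LinearMap.mulLeft ℝ z := by
  ext w; simp

/-- The trace form twisted by the involution. -/
noncomputable def weilForm (σ : A →ₗ[ℝ] A) : LinearMap.BilinForm ℝ A :=
  (((LinearMap.mul ℝ A).compl₂ σ).compr₂
    ((LinearMap.trace ℝ A).comp (LinearMap.mul ℝ A)))

lemma weilForm_apply (σ : A →ₗ[ℝ] A) (x y : A) :
    weilForm A σ x y = LinearMap.trace ℝ A (LinearMap.mulLeft ℝ (x * σ y)) := by
  simp only [weilForm, LinearMap.compr₂_apply, LinearMap.compl₂_apply,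
    LinearMap.mul_apply', LinearMap.comp_apply, mul_eq_mulLeft,
    LinearMap.mulLeft_apply]

lemma trace_mulLeft_comm (a b : A) :
    LinearMap.trace ℝ A (LinearMap.mulLeft ℝ (a * b))
      = LinearMap.trace ℝ A (LinearMap.mulLeft ℝ (b * a)) := by
  rw [LinearMap.mulLeft_mul, LinearMap.mulLeft_mul]
  exact LinearMap.trace_mul_comm ℝ (LinearMap.mulLeft ℝ a) (LinearMap.mulLeft ℝ b)

end Aux

set_option maxHeartbeats 1000000 in
/-- Weil's positivity argument: if `A` is a finite-dimensional real algebra with a positive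
involution `σ` and `α * σ α = q • 1` with `q > 0`, then every eigenvalue of left
multiplication by `α` on `A ⊗ ℂ` has absolute value `√q`. -/
theorem eigenvalue_abs_of_positive_involution
    (A : Type) [Ring A] [Algebra ℝ A] [FiniteDimensional ℝ A]
    (σ : A →ₗ[ℝ] A)
    (hanti : ∀ x y : A, σ (x * y) = σ y * σ x)
    (hinv : ∀ x : A, σ (σ x) = x)
    (hpos : ∀ x : A, x ≠ 0 →
      0 < LinearMap.trace ℝ A (LinearMap.mulLeft ℝ (x * σ x)))
    (α : A) (q : ℝ) (hq : 0 < q) (hα : α * σ α = q • (1 : A))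
    (lam : ℂ)
    (hlam : Module.End.HasEigenvalue
      ((LinearMap.mulLeft ℝ α).baseChange ℂ) lam) :
    ‖lam‖ = Real.sqrt q := by
  -- Notation
  set B : LinearMap.BilinForm ℝ A := weilForm A σ with hB
  -- `σ α * α = q • 1` by finite-dimensionality
  have hσαα : σ α * α = q • (1 : A) := by
    have hcomp : LinearMap.mulLeft ℝ α * LinearMap.mulLeft ℝ (σ α)
        = LinearMap.mulLeft ℝ (α * σ α) := by
      ext x
      simp [LinearMap.mulLeft_apply, mul_assoc]
    have h1 : (LinearMap.mulLeft ℝ α) * ((q⁻¹ • LinearMap.mulLeft ℝ (σ α)) :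
        Module.End ℝ A) = 1 := by
      rw [mul_smul_comm, hcomp, hα]
      ext x
      simp [LinearMap.mulLeft_apply, smul_smul, inv_mul_cancel₀ hq.ne']
    have h2 := mul_eq_one_comm.mp h1
    have h3 := congrArg (fun (f : Module.End ℝ A) => q • f 1) h2
    simp only [Module.End.mul_apply, LinearMap.smul_apply, LinearMap.mulLeft_apply,
      Module.End.one_apply, mul_one] at h3
    rw [smul_smul, mul_inv_cancel₀ hq.ne', one_smul] at h3
    simpa using h3
  -- invariance of the real form
  have hBinv : ∀ x y : A, B (α * x) (α * y) = q * B x y := by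
    intro x y
    rw [hB, weilForm_apply, weilForm_apply, hanti]
    have e1 : α * x * (σ y * σ α) = α * (x * σ y * σ α) := by
      simp only [mul_assoc]
    rw [e1, trace_mulLeft_comm]
    have e2 : x * σ y * σ α * α = q • (x * σ y) := by
      rw [mul_assoc, hσαα, mul_smul_comm, mul_one]
    rw [e2]
    have e3 : LinearMap.mulLeft ℝ (q • (x * σ y)) = q • LinearMap.mulLeft ℝ (x * σ y) := by
      ext z; simp [LinearMap.mulLeft_apply, smul_mul_assoc, mul_assoc]
    rw [e3, map_smul, smul_eq_mul]
  -- complexified objects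
  set T : (ℂ ⊗[ℝ] A) →ₗ[ℂ] (ℂ ⊗[ℝ] A) := (LinearMap.mulLeft ℝ α).baseChange ℂ with hT
  set Φ : LinearMap.BilinForm ℂ (ℂ ⊗[ℝ] A) := B.baseChange ℂ with hΦ
  set c : (ℂ ⊗[ℝ] A) →ₗ[ℝ] (ℂ ⊗[ℝ] A) :=
    TensorProduct.map (Complex.conjAe.toLinearMap : ℂ →ₗ[ℝ] ℂ) LinearMap.id with hc
  have hc_tmul : ∀ (z : ℂ) (a : A), c (z ⊗ₜ a) = (starRingEnd ℂ) z ⊗ₜ a := by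
    intro z a
    simp only [hc, TensorProduct.map_tmul, AlgEquiv.toLinearMap_apply,
      Complex.conjAe_coe, LinearMap.id_apply]
  have hT_tmul : ∀ (z : ℂ) (a : A), T (z ⊗ₜ a) = z ⊗ₜ (α * a) := by
    intro z a
    simp only [hT, LinearMap.baseChange_tmul, LinearMap.mulLeft_apply]
  -- T commutes with conjugation
  have hTc : ∀ u : ℂ ⊗[ℝ] A, T (c u) = c (T u) := by
    intro u
    induction u using TensorProduct.induction_on with
    | zero => simp only [map_zero]
    | tmul z a => rw [hc_tmul, hT_tmul, hT_tmul, hc_tmul]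
    | add u v hu hv => rw [map_add, map_add, hu, hv, map_add, map_add]
  -- conjugation is conjugate-linear
  have hcsmul : ∀ (z : ℂ) (u : ℂ ⊗[ℝ] A), c (z • u) = (starRingEnd ℂ) z • c u := by
    intro z u
    induction u using TensorProduct.induction_on with
    | zero => simp only [smul_zero, map_zero]
    | tmul w a =>
        simp only [smul_tmul', smul_eq_mul, hc_tmul, map_mul]
    | add u v hu hv => rw [smul_add, map_add, hu, hv, map_add, smul_add]
  -- invariance of the complexified form
  have hΦinv : ∀ u v : ℂ ⊗[ℝ] A, Φ (T u) (T v) = (q : ℂ) * Φ u v := by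
    intro u v
    induction u using TensorProduct.induction_on with
    | zero => rw [map_zero, map_zero, LinearMap.zero_apply, LinearMap.zero_apply, mul_zero]
    | tmul z a =>
        induction v using TensorProduct.induction_on with
        | zero => rw [map_zero, map_zero, map_zero, mul_zero]
        | tmul w b =>
            rw [hT_tmul, hT_tmul, hΦ, LinearMap.BilinForm.baseChange_tmul,
              LinearMap.BilinForm.baseChange_tmul, hBinv]
            simp only [mul_smul, Complex.real_smul]
        | add v₁ v₂ h₁ h₂ =>
            simp only [map_add, LinearMap.add_apply, h₁, h₂, mul_add]
    | add u₁ u₂ h₁ h₂ =>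
        simp only [map_add, LinearMap.add_apply, h₁, h₂, mul_add]
  -- real and imaginary parts
  set reM : (ℂ ⊗[ℝ] A) →ₗ[ℝ] A :=
    TensorProduct.lift ((LinearMap.lsmul ℝ A).comp Complex.reLm) with hre
  set imM : (ℂ ⊗[ℝ] A) →ₗ[ℝ] A :=
    TensorProduct.lift ((LinearMap.lsmul ℝ A).comp Complex.imLm) with him
  have hre_tmul : ∀ (z : ℂ) (a : A), reM (z ⊗ₜ a) = z.re • a := fun z a => rfl
  have him_tmul : ∀ (z : ℂ) (a : A), imM (z ⊗ₜ a) = z.im • a := fun z a => rfl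
  have hdecomp : ∀ u : ℂ ⊗[ℝ] A,
      u = (1 : ℂ) ⊗ₜ reM u + Complex.I ⊗ₜ imM u := by
    intro u
    induction u using TensorProduct.induction_on with
    | zero => rw [map_zero, map_zero, tmul_zero, tmul_zero, add_zero]
    | tmul z a =>
        rw [hre_tmul, him_tmul, ← smul_tmul, ← smul_tmul, ← add_tmul]
        congr 1
        rw [Complex.real_smul, Complex.real_smul, mul_one]
        exact (Complex.re_add_im z).symm
    | add u v hu hv =>
        rw [map_add, map_add, tmul_add, tmul_add, add_add_add_comm, ← hu, ← hv]
  -- positivity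
  have hBpos : ∀ a : A, a ≠ 0 → 0 < B a a := by
    intro a h
    rw [hB, weilForm_apply]
    exact hpos a h
  have hBnonneg : ∀ a : A, 0 ≤ B a a := by
    intro a
    rcases eq_or_ne a 0 with rfl | h
    · simp
    · exact le_of_lt (hBpos a h)
  -- get the eigenvector
  obtain ⟨v, hv⟩ := hlam.exists_hasEigenvector
  have hv0 : v ≠ 0 := hv.2
  have hvT : T v = lam • v := hv.apply_eq_smul
  set a := reM v with ha
  set b := imM v with hb
  have hvab : v = (1 : ℂ) ⊗ₜ a + Complex.I ⊗ₜ b := hdecomp v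
  have hab : a ≠ 0 ∨ b ≠ 0 := by
    by_contra h
    push_neg at h
    apply hv0
    rw [hvab, h.1, h.2, tmul_zero, tmul_zero, add_zero]
  have hcv : c ((1 : ℂ) ⊗ₜ a + Complex.I ⊗ₜ b)
      = (1 : ℂ) ⊗ₜ a + (-Complex.I) ⊗ₜ b := by
    rw [map_add, hc_tmul, hc_tmul, Complex.conj_I, map_one]
  have hΦvcv : (Φ v (c v)).re = B a a + B b b := by
    conv_lhs => rw [hvab, hcv]
    simp only [map_add, LinearMap.add_apply, hΦ, LinearMap.BilinForm.baseChange_tmul]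
    simp only [Complex.add_re, Complex.smul_re, one_mul, mul_one, mul_neg,
      Complex.I_mul_I, Complex.one_re, Complex.I_re, Complex.neg_re, Complex.mul_re,
      smul_eq_mul]
    ring
  have hΦpos : 0 < (Φ v (c v)).re := by
    rw [hΦvcv]
    rcases hab with h | h
    · exact add_pos_of_pos_of_nonneg (hBpos a h) (hBnonneg b)
    · exact add_pos_of_nonneg_of_pos (hBnonneg a) (hBpos b h)
  have hΦne : Φ v (c v) ≠ 0 := by
    intro h
    rw [h] at hΦpos
    simp at hΦpos
  -- main computation
  have key : (lam * (starRingEnd ℂ) lam) * Φ v (c v) = (q : ℂ) * Φ v (c v) := by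
    have h1 : Φ (T v) (T (c v)) = (q : ℂ) * Φ v (c v) := hΦinv v (c v)
    rw [hTc, hvT, hcsmul] at h1
    simp only [map_smul, LinearMap.smul_apply, smul_eq_mul] at h1
    rw [← h1]; ring
  have hnsq : lam * (starRingEnd ℂ) lam = (q : ℂ) :=
    mul_right_cancel₀ hΦne key
  have hsq : Complex.normSq lam = q := by
    have h := congrArg Complex.re hnsq
    rwa [Complex.mul_conj, Complex.ofReal_re] at h
  rw [Complex.norm_def, hsq]
end
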